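/- Let Ā : R^2 → R be C^1 with 0 ≤ ∂_1 Ā(v,w) ≤ C(1 + |v|^p) and −C(1 + |w|^p) ≤ ∂_2 Ā(v,w) ≤ 0 for all v, w ∈ R. Then for any v ∈ R^N indexed cyclically by Z/NZ, the discrete flux-difference satisfies: N ∑_{i∈T_N} (Ā(v_i, v_{i+1}) − Ā(v_{i-1}, v_i))^2 ≤ 8C^2 ( N ∑_i (v_i − v_{i-1})^2 + N ∑_i (v_i − v_{i-1}) ∫_{v_{i-1}}^{v_i} |z|^{2p} dz ). -/

import Mathlib

open MeasureTheory intervalIntegral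

lemma cs_aux {f : ℝ → ℝ} (hf : Continuous f) {a b : ℝ} (hab : a ≤ b) :
    (∫ z in a..b, f z) ^ 2 ≤ (b - a) * ∫ z in a..b, f z ^ 2 := by
  set μ := volume.restrict (Set.Ioc a b) with hμ
  haveI : IsFiniteMeasure μ := by
    constructor
    rw [hμ, Measure.restrict_apply_univ, Real.volume_Ioc]
    exact ENNReal.ofReal_lt_top
  obtain ⟨M, hM⟩ := (isCompact_Icc (a := a) (b := b)).exists_bound_of_continuousOn
    hf.continuousOn
  have hfm : MemLp f (ENNReal.ofReal 2) μ := by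
    refine MemLp.of_bound hf.aestronglyMeasurable M ?_
    exact ae_restrict_of_forall_mem measurableSet_Ioc fun x hx => hM x (Set.Ioc_subset_Icc_self hx)
  have h1m : MemLp (fun _ : ℝ => (1:ℝ)) (ENNReal.ofReal 2) μ := memLp_const 1
  have hpq : Real.HolderConjugate 2 2 := Real.HolderConjugate.two_two
  have hH := integral_mul_le_Lp_mul_Lq_of_nonneg (μ := μ) hpq
    (Filter.Eventually.of_forall fun x => abs_nonneg (f x))
    (Filter.Eventually.of_forall fun _ => zero_le_one) hfm.abs h1m
  have hμuniv : (μ Set.univ).toReal = b - a := by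
    rw [hμ, Measure.restrict_apply_univ, Real.volume_Ioc,
      ENNReal.toReal_ofReal (sub_nonneg.2 hab)]
  simp only [mul_one, Real.one_rpow, MeasureTheory.integral_const, smul_eq_mul, hμuniv] at hH
  have habs : ∀ x : ℝ, |f x| ^ (2:ℝ) = f x ^ 2 := fun x => by
    rw [show (2:ℝ) = ((2:ℕ):ℝ) by norm_num, Real.rpow_natCast, sq_abs]
  simp only [habs] at hH
  set X := ∫ x, f x ^ 2 ∂μ with hX
  have hXnn : 0 ≤ X := integral_nonneg fun x => sq_nonneg _
  have hYnn : (0:ℝ) ≤ b - a := sub_nonneg.2 hab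
  have hXr : (X ^ (1/2:ℝ)) ^ 2 = X := by
    rw [← Real.rpow_natCast (X ^ (1/2:ℝ)) 2, ← Real.rpow_mul hXnn]
    norm_num
  have hYr : ((b - a) ^ (1/2:ℝ)) ^ 2 = b - a := by
    rw [← Real.rpow_natCast ((b-a) ^ (1/2:ℝ)) 2, ← Real.rpow_mul hYnn]
    norm_num
  have h1 : ∫ z in a..b, f z = ∫ x, f x ∂μ := integral_of_le hab
  have h2 : ∫ z in a..b, f z ^ 2 = X := integral_of_le hab
  rw [h1, h2]
  have habs2 : |∫ x, f x ∂μ| ≤ ∫ x, |f x| ∂μ := by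
    simpa [Real.norm_eq_abs] using norm_integral_le_integral_norm (μ := μ) f
  have hnn : 0 ≤ ∫ x, |f x| ∂μ := integral_nonneg fun x => abs_nonneg _
  calc (∫ x, f x ∂μ) ^ 2 = |∫ x, f x ∂μ| ^ 2 := (sq_abs _).symm
    _ ≤ (∫ x, |f x| ∂μ) ^ 2 := pow_le_pow_left₀ (abs_nonneg _) habs2 2
    _ ≤ (X ^ (1/2:ℝ) * (b - a) ^ (1/2:ℝ)) ^ 2 := by
        refine pow_le_pow_left₀ hnn (by rwa [← hμuniv]) 2
    _ = (b - a) * X := by rw [mul_pow, hXr, hYr]; ring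


theorem flux_difference_bound (N : ℕ) [NeZero N] (Ab : ℝ → ℝ → ℝ)
    (hAb : ContDiff ℝ 1 (Function.uncurry Ab))
    (C : ℝ) (hC : 0 < C) (p : ℕ) (hp : 1 ≤ p)
    (h1l : ∀ v w : ℝ, 0 ≤ deriv (fun x => Ab x w) v)
    (h1u : ∀ v w : ℝ, deriv (fun x => Ab x w) v ≤ C * (1 + |v| ^ p))
    (h2l : ∀ v w : ℝ, -(C * (1 + |w| ^ p)) ≤ deriv (fun y => Ab v y) w)
    (h2u : ∀ v w : ℝ, deriv (fun y => Ab v y) w ≤ 0)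
    (v : ZMod N → ℝ) :
    (N : ℝ) * ∑ i : ZMod N, (Ab (v i) (v (i + 1)) - Ab (v (i - 1)) (v i)) ^ 2 ≤
      8 * C ^ 2 *
        ((N : ℝ) * ∑ i : ZMod N, (v i - v (i - 1)) ^ 2 +
          (N : ℝ) * ∑ i : ZMod N,
            (v i - v (i - 1)) * ∫ z in (v (i - 1))..(v i), |z| ^ (2 * p)) := by
  have hdiff : Differentiable ℝ (Function.uncurry Ab) := hAb.differentiable one_ne_zero
  have hd1 : ∀ (w x : ℝ), HasDerivAt (fun x => Ab x w)
      (fderiv ℝ (Function.uncurry Ab) (x, w) (1, 0)) x := fun w x =>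
    ((hdiff (x, w)).hasFDerivAt.comp_hasDerivAt x
      ((hasDerivAt_id' x).prodMk (hasDerivAt_const x w)) :
      HasDerivAt (Function.uncurry Ab ∘ fun x => (x, w)) _ x)
  have hd2 : ∀ (u y : ℝ), HasDerivAt (fun y => Ab u y)
      (fderiv ℝ (Function.uncurry Ab) (u, y) (0, 1)) y := fun u y =>
    (hdiff (u, y)).hasFDerivAt.comp_hasDerivAt y
      ((hasDerivAt_const y u).prodMk (hasDerivAt_id' y))
  have hfc : Continuous (fun q : ℝ × ℝ => fderiv ℝ (Function.uncurry Ab) q) :=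
    hAb.continuous_fderiv one_ne_zero
  have hc1 : ∀ w : ℝ, Continuous fun z => deriv (fun x => Ab x w) z := by
    intro w
    have he : (fun z => deriv (fun x => Ab x w) z)
        = fun z => fderiv ℝ (Function.uncurry Ab) (z, w) (1, 0) := by
      funext z; exact (hd1 w z).deriv
    rw [he]
    exact (hfc.comp (continuous_id.prodMk continuous_const)).clm_apply continuous_const
  have hc2 : ∀ u : ℝ, Continuous fun z => deriv (fun y => Ab u y) z := by
    intro u
    have he : (fun z => deriv (fun y => Ab u y) z)
        = fun z => fderiv ℝ (Function.uncurry Ab) (u, z) (0, 1) := by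
      funext z; exact (hd2 u z).deriv
    rw [he]
    exact (hfc.comp (continuous_const.prodMk continuous_id)).clm_apply continuous_const
  have key : ∀ a b c : ℝ,
      Ab b c - Ab a b =
        (∫ z in a..b, deriv (fun x => Ab x b) z)
          + (∫ z in b..c, deriv (fun y => Ab b y) z) := by
    intro a b c
    have e1 : ∫ z in a..b, deriv (fun x => Ab x b) z = Ab b b - Ab a b :=
      intervalIntegral.integral_deriv_eq_sub (fun x _ => (hd1 b x).differentiableAt)
        ((hc1 b).intervalIntegrable a b)
    have e2 : ∫ z in b..c, deriv (fun y => Ab b y) z = Ab b c - Ab b b :=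
      intervalIntegral.integral_deriv_eq_sub (fun y _ => (hd2 b y).differentiableAt)
        ((hc2 b).intervalIntegrable b c)
    rw [e1, e2]; ring
  set G : ℝ → ℝ → ℝ :=
    fun a b => (b - a) ^ 2 + (b - a) * ∫ z in a..b, |z| ^ (2 * p) with hG
  have hGsymm : ∀ a b : ℝ, G b a = G a b := by
    intro a b
    simp only [hG]
    rw [intervalIntegral.integral_symm]
    ring
  have intbound : ∀ (f : ℝ → ℝ), Continuous f → (∀ z, |f z| ≤ C * (1 + |z| ^ p)) →
      ∀ a b : ℝ, (∫ z in a..b, f z) ^ 2 ≤ 2 * C ^ 2 * G a b := by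
    have main : ∀ (f : ℝ → ℝ), Continuous f → (∀ z, |f z| ≤ C * (1 + |z| ^ p)) →
        ∀ a b : ℝ, a ≤ b → (∫ z in a..b, f z) ^ 2 ≤ 2 * C ^ 2 * G a b := by
      intro f hf hfb a b hab
      have h1 : (∫ z in a..b, f z) ^ 2 ≤ (b - a) * ∫ z in a..b, f z ^ 2 := cs_aux hf hab
      have hpt : ∀ z : ℝ, f z ^ 2 ≤ 2 * C ^ 2 * (1 + |z| ^ (2 * p)) := by
        intro z
        have h2 : |f z| ≤ C * (1 + |z| ^ p) := hfb z
        have h3 : f z ^ 2 ≤ (C * (1 + |z| ^ p)) ^ 2 := by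
          rw [← sq_abs]
          exact pow_le_pow_left₀ (abs_nonneg _) h2 2
        have h4 : |z| ^ (2 * p) = (|z| ^ p) ^ 2 := by
          rw [← pow_mul, mul_comm]
        rw [h4]
        nlinarith [sq_nonneg (1 - |z| ^ p), sq_nonneg (|z| ^ p), hC.le, sq_nonneg C]
      have h5 : ∫ z in a..b, f z ^ 2 ≤ ∫ z in a..b, 2 * C ^ 2 * (1 + |z| ^ (2 * p)) := by
        apply intervalIntegral.integral_mono_on hab
          ((hf.pow 2).intervalIntegrable a b)
          ((Continuous.intervalIntegrable (by continuity) a b))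
        exact fun z _ => hpt z
      have h6 : ∫ z in a..b, 2 * C ^ 2 * (1 + |z| ^ (2 * p))
          = 2 * C ^ 2 * ((b - a) + ∫ z in a..b, |z| ^ (2 * p)) := by
        rw [intervalIntegral.integral_const_mul]
        congr 1
        rw [intervalIntegral.integral_add (intervalIntegrable_const)
          ((Continuous.intervalIntegrable (by continuity) a b))]
        simp
      have h7 : (b - a) * ∫ z in a..b, f z ^ 2
          ≤ (b - a) * (2 * C ^ 2 * ((b - a) + ∫ z in a..b, |z| ^ (2 * p))) := by
        rw [← h6]
        exact mul_le_mul_of_nonneg_left h5 (sub_nonneg.2 hab)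
      calc (∫ z in a..b, f z) ^ 2 ≤ (b - a) * ∫ z in a..b, f z ^ 2 := h1
        _ ≤ (b - a) * (2 * C ^ 2 * ((b - a) + ∫ z in a..b, |z| ^ (2 * p))) := h7
        _ = 2 * C ^ 2 * G a b := by simp only [hG]; ring
    intro f hf hfb a b
    rcases le_total a b with hab | hab
    · exact main f hf hfb a b hab
    · have := main f hf hfb b a hab
      rw [intervalIntegral.integral_symm, neg_pow, ← hGsymm]
      simpa using this
  have point : ∀ i : ZMod N,
      (Ab (v i) (v (i + 1)) - Ab (v (i - 1)) (v i)) ^ 2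
        ≤ 4 * C ^ 2 * (G (v (i - 1)) (v i) + G (v i) (v (i + 1))) := by
    intro i
    set a := v (i - 1)
    set b := v i
    set c := v (i + 1)
    have hk := key a b c
    have hb1 : ∀ z : ℝ, |deriv (fun x => Ab x b) z| ≤ C * (1 + |z| ^ p) := fun z => by
      rw [abs_of_nonneg (h1l z b)]; exact h1u z b
    have hb2 : ∀ z : ℝ, |deriv (fun y => Ab b y) z| ≤ C * (1 + |z| ^ p) := fun z => by
      rw [abs_of_nonpos (h2u b z)]
      linarith [h2l b z]
    have h1 := intbound (fun z => deriv (fun x => Ab x b) z) (hc1 b) hb1 a b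
    have h2 := intbound (fun z => deriv (fun y => Ab b y) z) (hc2 b) hb2 b c
    rw [hk]
    nlinarith [sq_nonneg ((∫ z in a..b, deriv (fun x => Ab x b) z)
      - (∫ z in b..c, deriv (fun y => Ab b y) z))]
  have hshift : ∑ i : ZMod N, G (v i) (v (i + 1)) = ∑ i : ZMod N, G (v (i - 1)) (v i) := by
    apply Fintype.sum_equiv (Equiv.addRight (1 : ZMod N))
    intro i
    simp [add_sub_cancel_right]
  have hsum : ∑ i : ZMod N, (Ab (v i) (v (i + 1)) - Ab (v (i - 1)) (v i)) ^ 2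
      ≤ 8 * C ^ 2 * ∑ i : ZMod N, G (v (i - 1)) (v i) := by
    calc ∑ i : ZMod N, (Ab (v i) (v (i + 1)) - Ab (v (i - 1)) (v i)) ^ 2
        ≤ ∑ i : ZMod N, 4 * C ^ 2 * (G (v (i - 1)) (v i) + G (v i) (v (i + 1))) :=
          Finset.sum_le_sum fun i _ => point i
      _ = 4 * C ^ 2 * (∑ i : ZMod N, G (v (i - 1)) (v i)
            + ∑ i : ZMod N, G (v i) (v (i + 1))) := by
          rw [← Finset.mul_sum, Finset.sum_add_distrib]
      _ = 8 * C ^ 2 * ∑ i : ZMod N, G (v (i - 1)) (v i) := by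
          rw [hshift]; ring
  have hGsum : ∑ i : ZMod N, G (v (i - 1)) (v i)
      = (∑ i : ZMod N, (v i - v (i - 1)) ^ 2)
        + ∑ i : ZMod N, (v i - v (i - 1)) * ∫ z in (v (i - 1))..(v i), |z| ^ (2 * p) := by
    simp only [hG]
    exact Finset.sum_add_distrib
  calc (N : ℝ) * ∑ i : ZMod N, (Ab (v i) (v (i + 1)) - Ab (v (i - 1)) (v i)) ^ 2
      ≤ (N : ℝ) * (8 * C ^ 2 * ∑ i : ZMod N, G (v (i - 1)) (v i)) :=
        mul_le_mul_of_nonneg_left hsum (Nat.cast_nonneg N)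
    _ = _ := by rw [hGsum]; ring
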